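/- Let k be a field, n ≥ 2 an integer, ζ ∈ k a primitive n-th root of unity, r an integer, x ∈ k, and set ω := 1 − ζ^{2r}. Assume ω is invertible in k (i.e. ζ^{2r} ≠ 1). Let S be the k-algebra with generators e₀, e₁, e_{n−1} and relations e₀e₁ − ζ^r e₁e₀ = (1 − ζ^r)e₁, e_{n−1}e₀ − ζ^r e₀e_{n−1} = (1 − ζ^r)e_{n−1}, e_{n−1}e₁ − ζ^{2r} e₁e_{n−1} = xω e₀. Then S is isomorphic as a k-algebra to the Jackson algebra 𝒥_x(r), via an isomorphism carrying the generator e_{n−1} of S to the generator e₂ of 𝒥_x(r) and e₁ to e₁. -/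
import Mathlib


/-- The defining relations of the Jackson algebra `𝒥_x(r)` over `k`:
generators `e₀, e₁, e₂` and relations `e₀e₁ = ζ^r e₁e₀`, `e₂e₀ = ζ^r e₀e₂`,
`e₂e₁ = ζ^{2r} e₁e₂ + x e₀ + x (1 − ζ^{2r})`. -/
inductive JacksonRel (k : Type*) [Field k] (ζ : k) (r : ℤ) (x : k) :
    FreeAlgebra k (Fin 3) → FreeAlgebra k (Fin 3) → Prop
  | r01 : JacksonRel k ζ r x (FreeAlgebra.ι k 0 * FreeAlgebra.ι k 1)
      (ζ ^ r • (FreeAlgebra.ι k 1 * FreeAlgebra.ι k 0))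
  | r20 : JacksonRel k ζ r x (FreeAlgebra.ι k 2 * FreeAlgebra.ι k 0)
      (ζ ^ r • (FreeAlgebra.ι k 0 * FreeAlgebra.ι k 2))
  | r21 : JacksonRel k ζ r x (FreeAlgebra.ι k 2 * FreeAlgebra.ι k 1)
      (ζ ^ (2 * r) • (FreeAlgebra.ι k 1 * FreeAlgebra.ι k 2) + x • FreeAlgebra.ι k 0 +
        (x * (1 - ζ ^ (2 * r))) • (1 : FreeAlgebra k (Fin 3)))

/-- The Jackson algebra `𝒥_x(r)` over `k`. -/
abbrev Jackson (k : Type*) [Field k] (ζ : k) (r : ℤ) (x : k) :=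
  RingQuot (JacksonRel k ζ r x)

/-- The generators `e₀, e₁, e₂` of the Jackson algebra. -/
noncomputable def JacksonGen (k : Type*) [Field k] (ζ : k) (r : ℤ) (x : k) (i : Fin 3) :
    Jackson k ζ r x :=
  RingQuot.mkAlgHom k (JacksonRel k ζ r x) (FreeAlgebra.ι k i)

/-- The defining relations of the algebra `S`: generators `f₀, f₁, f₂` (with `f₂`
standing for `e_{n−1}`) and relations `f₀f₁ − ζ^r f₁f₀ = (1 − ζ^r) f₁`,
`f₂f₀ − ζ^r f₀f₂ = (1 − ζ^r) f₂`, `f₂f₁ − ζ^{2r} f₁f₂ = x (1 − ζ^{2r}) f₀`. -/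
inductive SRel (k : Type*) [Field k] (ζ : k) (r : ℤ) (x : k) :
    FreeAlgebra k (Fin 3) → FreeAlgebra k (Fin 3) → Prop
  | r01 : SRel k ζ r x (FreeAlgebra.ι k 0 * FreeAlgebra.ι k 1)
      (ζ ^ r • (FreeAlgebra.ι k 1 * FreeAlgebra.ι k 0) + (1 - ζ ^ r) • FreeAlgebra.ι k 1)
  | r20 : SRel k ζ r x (FreeAlgebra.ι k 2 * FreeAlgebra.ι k 0)
      (ζ ^ r • (FreeAlgebra.ι k 0 * FreeAlgebra.ι k 2) + (1 - ζ ^ r) • FreeAlgebra.ι k 2)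
  | r21 : SRel k ζ r x (FreeAlgebra.ι k 2 * FreeAlgebra.ι k 1)
      (ζ ^ (2 * r) • (FreeAlgebra.ι k 1 * FreeAlgebra.ι k 2) +
        (x * (1 - ζ ^ (2 * r))) • FreeAlgebra.ι k 0)

/-- The algebra `S` (the subalgebra of the Kummer–Witt algebra on `e₀, e₁, e_{n−1}`,
presented abstractly). -/
abbrev SAlg (k : Type*) [Field k] (ζ : k) (r : ℤ) (x : k) := RingQuot (SRel k ζ r x)

/-- The generators `f₀, f₁, f₂` of `S`. -/
noncomputable def SGen (k : Type*) [Field k] (ζ : k) (r : ℤ) (x : k) (i : Fin 3) :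
    SAlg k ζ r x :=
  RingQuot.mkAlgHom k (SRel k ζ r x) (FreeAlgebra.ι k i)

/-- Let `k` be a field, `n ≥ 2`, `ζ ∈ k` a primitive `n`-th root of
unity, `r` an integer, `x ∈ k`, and `ω := 1 − ζ^{2r}` invertible (i.e. `ζ^{2r} ≠ 1`).
Then `S` is isomorphic as a `k`-algebra to the Jackson algebra `𝒥_x(r)`, via an
isomorphism carrying the generator `f₂ = e_{n−1}` of `S` to the generator `e₂` of
`𝒥_x(r)` and `f₁` to `e₁`. -/
theorem sAlg_iso_jackson (k : Type*) [Field k] (n : ℕ) (hn : 2 ≤ n)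
    (ζ : k) (hζ : IsPrimitiveRoot ζ n) (r : ℤ) (x : k) (hω : ζ ^ (2 * r) ≠ 1) :
    ∃ φ : SAlg k ζ r x ≃ₐ[k] Jackson k ζ r x,
      φ (SGen k ζ r x 2) = JacksonGen k ζ r x 2 ∧
      φ (SGen k ζ r x 1) = JacksonGen k ζ r x 1 := by
  set ω : k := 1 - ζ ^ (2 * r) with hωdef
  have hω0 : ω ≠ 0 := sub_ne_zero.mpr (Ne.symm hω)
  set E : Fin 3 → Jackson k ζ r x := JacksonGen k ζ r x with hE
  set F : Fin 3 → SAlg k ζ r x := SGen k ζ r x with hF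
  -- relations in the Jackson algebra
  have hJ01 : E 0 * E 1 = ζ ^ r • (E 1 * E 0) := by
    have := RingQuot.mkAlgHom_rel k (JacksonRel.r01 (k := k) (ζ := ζ) (r := r) (x := x))
    simpa [hE, JacksonGen, map_mul, map_smul] using this
  have hJ20 : E 2 * E 0 = ζ ^ r • (E 0 * E 2) := by
    have := RingQuot.mkAlgHom_rel k (JacksonRel.r20 (k := k) (ζ := ζ) (r := r) (x := x))
    simpa [hE, JacksonGen, map_mul, map_smul] using this
  have hJ21 : E 2 * E 1 = ζ ^ (2 * r) • (E 1 * E 2) + x • E 0 + (x * ω) • 1 := by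
    have := RingQuot.mkAlgHom_rel k (JacksonRel.r21 (k := k) (ζ := ζ) (r := r) (x := x))
    simpa [hE, JacksonGen, map_mul, map_add, map_smul, map_one] using this
  -- relations in S
  have hS01 : F 0 * F 1 = ζ ^ r • (F 1 * F 0) + (1 - ζ ^ r) • F 1 := by
    have := RingQuot.mkAlgHom_rel k (SRel.r01 (k := k) (ζ := ζ) (r := r) (x := x))
    simpa [hF, SGen, map_mul, map_add, map_smul] using this
  have hS20 : F 2 * F 0 = ζ ^ r • (F 0 * F 2) + (1 - ζ ^ r) • F 2 := by
    have := RingQuot.mkAlgHom_rel k (SRel.r20 (k := k) (ζ := ζ) (r := r) (x := x))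
    simpa [hF, SGen, map_mul, map_add, map_smul] using this
  have hS21 : F 2 * F 1 = ζ ^ (2 * r) • (F 1 * F 2) + (x * ω) • F 0 := by
    have := RingQuot.mkAlgHom_rel k (SRel.r21 (k := k) (ζ := ζ) (r := r) (x := x))
    simpa [hF, SGen, map_mul, map_add, map_smul] using this
  -- the map S → Jackson on generators
  set f : Fin 3 → Jackson k ζ r x := ![ω⁻¹ • E 0 + 1, E 1, E 2] with hf
  set g : Fin 3 → SAlg k ζ r x := ![ω • F 0 - ω • 1, F 1, F 2] with hg
  have hfrel : ∀ ⦃a b : FreeAlgebra k (Fin 3)⦄, SRel k ζ r x a b →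
      (FreeAlgebra.lift k f) a = (FreeAlgebra.lift k f) b := by
    intro a b hab
    induction hab with
    | r01 =>
      simp only [map_add, map_mul, map_smul, FreeAlgebra.lift_ι_apply, hf]
      simp only [Matrix.cons_val_zero, Matrix.cons_val_one, Matrix.head_cons]
      simp only [mul_add, add_mul, mul_sub, sub_mul, mul_smul_comm, smul_mul_assoc,
        mul_one, one_mul]
      rw [hJ01]
      module
    | r20 =>
      simp only [map_add, map_mul, map_smul, FreeAlgebra.lift_ι_apply, hf]
      simp only [Matrix.cons_val_zero, Matrix.cons_val_one, Matrix.head_cons,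
        Matrix.cons_val_two, Matrix.tail_cons]
      simp only [mul_add, add_mul, mul_sub, sub_mul, mul_smul_comm, smul_mul_assoc,
        mul_one, one_mul]
      rw [hJ20]
      module
    | r21 =>
      simp only [map_add, map_mul, map_smul, FreeAlgebra.lift_ι_apply, hf]
      simp only [Matrix.cons_val_zero, Matrix.cons_val_one, Matrix.head_cons,
        Matrix.cons_val_two, Matrix.tail_cons]
      simp only [mul_add, add_mul, mul_sub, sub_mul, mul_smul_comm, smul_mul_assoc,
        mul_one, one_mul]
      rw [hJ21]
      match_scalars <;> (simp only [hωdef]; try field_simp; try ring)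
  have hgrel : ∀ ⦃a b : FreeAlgebra k (Fin 3)⦄, JacksonRel k ζ r x a b →
      (FreeAlgebra.lift k g) a = (FreeAlgebra.lift k g) b := by
    intro a b hab
    induction hab with
    | r01 =>
      simp only [map_add, map_mul, map_smul, FreeAlgebra.lift_ι_apply, hg]
      simp only [Matrix.cons_val_zero, Matrix.cons_val_one, Matrix.head_cons]
      simp only [mul_add, add_mul, mul_sub, sub_mul, mul_smul_comm, smul_mul_assoc,
        mul_one, one_mul]
      rw [hS01]
      module
    | r20 =>
      simp only [map_add, map_mul, map_smul, FreeAlgebra.lift_ι_apply, hg]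
      simp only [Matrix.cons_val_zero, Matrix.cons_val_one, Matrix.head_cons,
        Matrix.cons_val_two, Matrix.tail_cons]
      simp only [mul_add, add_mul, mul_sub, sub_mul, mul_smul_comm, smul_mul_assoc,
        mul_one, one_mul]
      rw [hS20]
      module
    | r21 =>
      simp only [map_add, map_mul, map_smul, map_one, FreeAlgebra.lift_ι_apply, hg]
      simp only [Matrix.cons_val_zero, Matrix.cons_val_one, Matrix.head_cons,
        Matrix.cons_val_two, Matrix.tail_cons]
      simp only [mul_add, add_mul, mul_sub, sub_mul, mul_smul_comm, smul_mul_assoc,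
        mul_one, one_mul]
      rw [hS21]
      module
  set Φ : SAlg k ζ r x →ₐ[k] Jackson k ζ r x :=
    RingQuot.liftAlgHom k ⟨FreeAlgebra.lift k f, hfrel⟩ with hΦ
  set Ψ : Jackson k ζ r x →ₐ[k] SAlg k ζ r x :=
    RingQuot.liftAlgHom k ⟨FreeAlgebra.lift k g, hgrel⟩ with hΨ
  have hΦF : ∀ i, Φ (F i) = f i := fun i => by
    simp [hΦ, hF, SGen, RingQuot.liftAlgHom_mkAlgHom_apply]
  have hΨE : ∀ i, Ψ (E i) = g i := fun i => by
    simp [hΨ, hE, JacksonGen, RingQuot.liftAlgHom_mkAlgHom_apply]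
  have hΦΨ : Φ.comp Ψ = AlgHom.id k (Jackson k ζ r x) := by
    apply RingQuot.ringQuot_ext'
    apply FreeAlgebra.hom_ext
    funext i
    have : RingQuot.mkAlgHom k (JacksonRel k ζ r x) (FreeAlgebra.ι k i) = E i := rfl
    simp only [AlgHom.comp_assoc, Function.comp_apply, AlgHom.coe_comp, this, AlgHom.coe_id,
      id_eq]
    rw [hΨE i]
    fin_cases i
    · show Φ (ω • F 0 - ω • 1) = E 0
      rw [map_sub, map_smul, map_smul, map_one, hΦF 0]
      show ω • (ω⁻¹ • E 0 + 1) - ω • 1 = E 0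
      rw [smul_add, smul_smul, mul_inv_cancel₀ hω0, one_smul]
      abel
    · show Φ (F 1) = E 1
      rw [hΦF 1]; rfl
    · show Φ (F 2) = E 2
      rw [hΦF 2]; rfl
  have hΨΦ : Ψ.comp Φ = AlgHom.id k (SAlg k ζ r x) := by
    apply RingQuot.ringQuot_ext'
    apply FreeAlgebra.hom_ext
    funext i
    have : RingQuot.mkAlgHom k (SRel k ζ r x) (FreeAlgebra.ι k i) = F i := rfl
    simp only [AlgHom.comp_assoc, Function.comp_apply, AlgHom.coe_comp, this, AlgHom.coe_id,
      id_eq]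
    rw [hΦF i]
    fin_cases i
    · show Ψ (ω⁻¹ • E 0 + 1) = F 0
      rw [map_add, map_smul, map_one, hΨE 0]
      show ω⁻¹ • (ω • F 0 - ω • 1) + 1 = F 0
      rw [smul_sub, smul_smul, smul_smul, inv_mul_cancel₀ hω0, one_smul, one_smul]
      abel
    · show Ψ (E 1) = F 1
      rw [hΨE 1]; rfl
    · show Ψ (E 2) = F 2
      rw [hΨE 2]; rfl
  refine ⟨AlgEquiv.ofAlgHom Φ Ψ hΦΨ hΨΦ, ?_, ?_⟩
  · show Φ (F 2) = E 2
    rw [hΦF 2]; rfl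
  · show Φ (F 1) = E 1
    rw [hΦF 1]; rfl
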